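/- Fix an integer n ≥ 2 and indices 1 ≤ i, j ≤ n. Then the sequence of Laurent polynomials k ↦ (Ω_n^k)_{ij} (for k ∈ ℕ, k ≥ 1) stabilizes positively, and for every r ∈ ℤ its eventual coefficient at r equals the coefficient of T^r in the formal power series T^{j−1}(1 − T) ∑_{m=0}^∞ T^{nm}; equivalently, the eventual coefficients are the coefficients of the unique formal power series S ∈ ℤ[[T]] satisfying (1 + T + ⋯ + T^{n−1}) · S = T^{j−1}. -/

import Mathlib

open LaurentPolynomial

/-- The coefficient of `T^r` in a Laurent polynomial. -/
noncomputable def lcoeff (p : LaurentPolynomial ℤ) (r : ℤ) : ℤ := AddMonoidAlgebra.coeff p r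

/-- A sequence of Laurent polynomials stabilizes positively if for every `r₀` the
coefficients in degrees `≤ r₀` are eventually constant in `t`. -/
def StabilizesPositively (p : ℕ → LaurentPolynomial ℤ) : Prop :=
  ∀ r₀ : ℤ, ∃ t₀ : ℕ, ∀ t ≥ t₀, ∀ r ≤ r₀, lcoeff (p t) r = lcoeff (p t₀) r

/-- `L` is the eventual coefficient function of the sequence `p`. -/
def IsEventualCoeff (p : ℕ → LaurentPolynomial ℤ) (L : ℤ → ℤ) : Prop :=
  ∀ r : ℤ, ∃ t₀ : ℕ, ∀ t ≥ t₀, lcoeff (p t) r = L r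

/-- The unreduced Burau generator matrix (0-indexed). -/
noncomputable def burauGen (n : ℕ) (k : ℕ) :
    Matrix (Fin n) (Fin n) (LaurentPolynomial ℤ) :=
  Matrix.of fun i j =>
    if (i : ℕ) = k ∧ (j : ℕ) = k then 1 - T 1
    else if (i : ℕ) = k ∧ (j : ℕ) = k + 1 then T 1
    else if (i : ℕ) = k + 1 ∧ (j : ℕ) = k then 1
    else if (i : ℕ) = k + 1 ∧ (j : ℕ) = k + 1 then 0
    else if i = j then 1 else 0

/-- The full twist matrix `Ω_n = (ψ_1 ψ_2 ⋯ ψ_{n-1})^n`. -/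
noncomputable def fullTwist (n : ℕ) : Matrix (Fin n) (Fin n) (LaurentPolynomial ℤ) :=
  (((List.range (n - 1)).map fun k => burauGen n k).prod) ^ n

noncomputable def Pmat (n k : ℕ) : Matrix (Fin n) (Fin n) (LaurentPolynomial ℤ) :=
  Matrix.of fun i j =>
    if (i : ℕ) = 0 then
      (if (j : ℕ) < k then T (j : ℕ) - T ((j : ℕ) + 1) else if (j : ℕ) = k then T (j : ℕ) else 0)
    else if (i : ℕ) ≤ k then (if (j : ℕ) + 1 = (i : ℕ) then 1 else 0)
    else if i = j then 1 else 0

lemma genmul {n : ℕ} (M : Matrix (Fin n) (Fin n) (LaurentPolynomial ℤ)) (k : ℕ)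
    (hk : k + 1 < n) (i j : Fin n) :
    (M * burauGen n k) i j =
      if (j : ℕ) = k then M i ⟨k, by omega⟩ * (1 - T 1) + M i ⟨k+1, hk⟩
      else if (j : ℕ) = k + 1 then M i ⟨k, by omega⟩ * T 1
      else M i j := by
  rw [Matrix.mul_apply]
  by_cases hj : (j : ℕ) = k
  · rw [if_pos hj]
    have : ∀ l : Fin n, M i l * burauGen n k l j =
        (if l = ⟨k, by omega⟩ then M i l * (1 - T 1) else 0) +
        (if l = ⟨k+1, hk⟩ then M i l else 0) := by
      intro l
      simp only [burauGen, Matrix.of_apply, hj, Fin.ext_iff, and_true, and_false, Nat.left_eq_add, Nat.succ_ne_self]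
      split_ifs <;> first | ring1 | contradiction | omega | (exfalso; omega)
    rw [Finset.sum_congr rfl fun l _ => this l, Finset.sum_add_distrib,
      Finset.sum_ite_eq' , Finset.sum_ite_eq']
    simp
  · rw [if_neg hj]
    by_cases hj' : (j : ℕ) = k + 1
    · rw [if_pos hj']
      have : ∀ l : Fin n, M i l * burauGen n k l j =
          (if l = ⟨k, by omega⟩ then M i l * T 1 else 0) := by
        intro l
        simp only [burauGen, Matrix.of_apply, hj', Fin.ext_iff, and_true, and_false, Nat.left_eq_add, Nat.succ_ne_self]
        split_ifs <;> first | ring1 | contradiction | omega | (exfalso; omega)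
      rw [Finset.sum_congr rfl fun l _ => this l, Finset.sum_ite_eq']
      simp
    · rw [if_neg hj']
      have : ∀ l : Fin n, M i l * burauGen n k l j =
          (if l = j then M i l else 0) := by
        intro l
        simp only [burauGen, Matrix.of_apply, Fin.ext_iff]
        split_ifs <;> first | ring1 | contradiction | omega | (exfalso; omega)
      rw [Finset.sum_congr rfl fun l _ => this l, Finset.sum_ite_eq']
      simp

noncomputable def Qmat (n m : ℕ) : Matrix (Fin n) (Fin n) (LaurentPolynomial ℤ) :=
  Matrix.of fun i j =>
    if m ≤ (i : ℕ) then (if (i : ℕ) = (j : ℕ) + m then 1 else 0)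
    else (T (j : ℕ) - T ((j : ℕ) + 1)) + (if (j : ℕ) = (i : ℕ) + n - m then T (n : ℕ) else 0)

lemma Pmat_succ {n : ℕ} (k : ℕ) (hk : k + 1 < n) :
    Pmat n k * burauGen n k = Pmat n (k + 1) := by
  refine Matrix.ext fun i j => ?_
  rw [genmul _ k hk]
  by_cases hj : (j : ℕ) = k
  · rw [if_pos hj]
    simp only [Pmat, Matrix.of_apply, hj, Fin.ext_iff]
    split_ifs <;>
      first | ring1 | contradiction | omega | (exfalso; omega) | (rw [mul_sub, mul_one, ← T_add]; push_cast; ring1)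
  · rw [if_neg hj]
    by_cases hj' : (j : ℕ) = k + 1
    · rw [if_pos hj']
      simp only [Pmat, Matrix.of_apply, hj', Fin.ext_iff]
      split_ifs <;>
        first | ring1 | contradiction | omega | (exfalso; omega) | (rw [← T_add]; push_cast; ring1)
    · rw [if_neg hj']
      simp only [Pmat, Matrix.of_apply, Fin.ext_iff]
      split_ifs <;>
        first | ring1 | contradiction | omega | (exfalso; omega)

lemma prod_eq_Pmat {n : ℕ} (hn : 2 ≤ n) :
    (((List.range (n - 1)).map fun k => burauGen n k).prod) = Pmat n (n - 1) := by
  suffices h : ∀ k, k ≤ n - 1 → (((List.range k).map fun k => burauGen n k).prod) = Pmat n k from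
    h (n - 1) le_rfl
  intro k hk
  induction k with
  | zero =>
    simp only [List.range_zero, List.map_nil, List.prod_nil]
    refine Matrix.ext fun i j => ?_
    simp only [Pmat, Matrix.of_apply, Matrix.one_apply, Fin.ext_iff]
    split_ifs <;> first | rfl | (exfalso; omega) | simp_all | omega
  | succ k ih =>
    rw [List.range_succ, List.map_append, List.prod_append, List.map_singleton,
      List.prod_singleton, ih (by omega), Pmat_succ k (by omega)]

lemma mulA_lt {n : ℕ} (hn : 2 ≤ n) (M : Matrix (Fin n) (Fin n) (LaurentPolynomial ℤ))
    (i j : Fin n) (hj : (j : ℕ) + 1 < n) :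
    (M * Pmat n (n - 1)) i j =
      M i ⟨0, by omega⟩ * (T (j : ℕ) - T ((j : ℕ) + 1)) + M i ⟨(j : ℕ) + 1, hj⟩ := by
  rw [Matrix.mul_apply]
  have key : ∀ l : Fin n, M i l * Pmat n (n - 1) l j =
      (if l = ⟨0, by omega⟩ then M i l * (T (j : ℕ) - T ((j : ℕ) + 1)) else 0) +
      (if l = ⟨(j : ℕ) + 1, hj⟩ then M i l else 0) := by
    intro l
    simp only [Pmat, Matrix.of_apply, Fin.ext_iff]
    split_ifs <;> first | ring1 | contradiction | omega | (exfalso; omega)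
  rw [Finset.sum_congr rfl fun l _ => key l, Finset.sum_add_distrib,
    Finset.sum_ite_eq', Finset.sum_ite_eq']
  simp

lemma mulA_last {n : ℕ} (hn : 2 ≤ n) (M : Matrix (Fin n) (Fin n) (LaurentPolynomial ℤ))
    (i j : Fin n) (hj : (j : ℕ) = n - 1) :
    (M * Pmat n (n - 1)) i j = M i ⟨0, by omega⟩ * T (j : ℕ) := by
  rw [Matrix.mul_apply]
  have key : ∀ l : Fin n, M i l * Pmat n (n - 1) l j =
      (if l = ⟨0, by omega⟩ then M i l * T (j : ℕ) else 0) := by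
    intro l
    have hl := l.isLt
    simp only [Pmat, Matrix.of_apply, Fin.ext_iff]
    split_ifs <;> first | ring1 | contradiction | omega | (exfalso; omega)
  rw [Finset.sum_congr rfl fun l _ => key l, Finset.sum_ite_eq']
  simp

lemma Amat_eq_Q1 {n : ℕ} (hn : 2 ≤ n) : Pmat n (n - 1) = Qmat n 1 := by
  refine Matrix.ext fun i j => ?_
  have hj := j.isLt
  simp only [Pmat, Qmat, Matrix.of_apply]
  split_ifs <;>
    first | ring1 | contradiction | (exfalso; omega) |
      (push_cast; (try simp only [T_add, T_zero]); ring1) |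
      (push_cast; rw [show ((j:ℕ):ℤ) + 1 = (n:ℤ) by omega]; (try simp only [T_add, T_zero]); ring1)

lemma Qmat_mul {n : ℕ} (hn : 2 ≤ n) (m : ℕ) (h1 : 1 ≤ m) (h2 : m + 1 ≤ n) :
    Qmat n m * Pmat n (n - 1) = Qmat n (m + 1) := by
  refine Matrix.ext fun i j => ?_
  have hi := i.isLt
  by_cases hj : (j : ℕ) + 1 < n
  · rw [mulA_lt hn _ i j hj]
    simp only [Qmat, Matrix.of_apply, Fin.val_mk]
    split_ifs <;>
      first | ring1 | contradiction | (exfalso; omega) |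
        (push_cast; (try simp only [T_add, T_zero]); ring1) |
        (push_cast; rw [show ((j:ℕ):ℤ) + 1 = (n:ℤ) by omega]; (try simp only [T_add, T_zero]); ring1)
  · have hj' : (j : ℕ) = n - 1 := by have := j.isLt; omega
    rw [mulA_last hn _ i j hj']
    simp only [Qmat, Matrix.of_apply, Fin.val_mk]
    split_ifs <;>
      first | ring1 | contradiction | (exfalso; omega) |
        (push_cast; (try simp only [T_add, T_zero]); ring1) |
        (push_cast; rw [show ((j:ℕ):ℤ) + 1 = (n:ℤ) by omega]; (try simp only [T_add, T_zero]); ring1)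

lemma Apow {n : ℕ} (hn : 2 ≤ n) : ∀ m, 1 ≤ m → m ≤ n → Pmat n (n - 1) ^ m = Qmat n m := by
  intro m
  induction m with
  | zero => omega
  | succ m ih =>
    intro _ hm
    rcases Nat.eq_or_lt_of_le (show 1 ≤ m + 1 by omega) with h | h
    · rw [← h]
      simpa using Amat_eq_Q1 hn
    · have hm1 : 1 ≤ m := by omega
      rw [pow_succ, ih hm1 (by omega), Qmat_mul hn m hm1 (by omega)]

lemma fullTwist_eq {n : ℕ} (hn : 2 ≤ n) : fullTwist n = Qmat n n := by
  rw [fullTwist, prod_eq_Pmat hn, Apow hn n (by omega) le_rfl]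

lemma fullTwist_apply {n : ℕ} (hn : 2 ≤ n) (l j : Fin n) :
    fullTwist n l j =
      (T (j : ℕ) - T ((j : ℕ) + 1)) + (if l = j then T ((n : ℕ)) else 0) := by
  rw [fullTwist_eq hn]
  simp only [Qmat, Matrix.of_apply]
  rw [if_neg (by omega : ¬ n ≤ (l : ℕ)), show (l : ℕ) + n - n = (l : ℕ) by omega]
  congr 1
  by_cases h : l = j
  · rw [if_pos (by simp [h]), if_pos h]
  · rw [if_neg (fun hc => h (Fin.ext hc.symm)), if_neg h]

lemma telescope {n : ℕ} :
    ∑ l ∈ Finset.range n, ((T (l : ℕ) : LaurentPolynomial ℤ) - T ((l : ℕ) + 1)) =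
      1 - T ((n : ℕ)) := by
  have h := Finset.sum_range_sub' (fun m : ℕ => (T (m : ℕ) : LaurentPolynomial ℤ)) n
  push_cast at h
  rw [← T_zero (R := ℤ)]
  convert h using 2 <;> push_cast <;> ring_nf

lemma fullTwist_pow {n : ℕ} (hn : 2 ≤ n) :
    ∀ k, ∀ i j : Fin n, (fullTwist n ^ (k + 1)) i j =
      (∑ m ∈ Finset.range (k + 1), T ((n * m : ℕ))) * (T (j : ℕ) - T ((j : ℕ) + 1)) +
      (if i = j then T ((n * (k + 1) : ℕ)) else 0) := by
  intro k
  induction k with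
  | zero =>
    intro i j
    rw [pow_one, fullTwist_apply hn]
    simp [T_zero]
  | succ k ih =>
    intro i j
    rw [pow_succ, Matrix.mul_apply]
    have step : ∀ l : Fin n, (fullTwist n ^ (k + 1)) i l * fullTwist n l j =
        (fullTwist n ^ (k + 1)) i l * (T (j : ℕ) - T ((j : ℕ) + 1)) +
        (if l = j then (fullTwist n ^ (k + 1)) i l * T ((n : ℕ)) else 0) := by
      intro l
      rw [fullTwist_apply hn]
      by_cases h : l = j <;> simp [h] <;> ring
    rw [Finset.sum_congr rfl fun l _ => step l, Finset.sum_add_distrib,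
      Finset.sum_ite_eq' Finset.univ j, if_pos (Finset.mem_univ j), ← Finset.sum_mul]
    have hrow : (∑ l : Fin n, (fullTwist n ^ (k + 1)) i l) =
        (∑ m ∈ Finset.range (k + 1), T ((n * m : ℕ))) * (1 - T ((n : ℕ))) +
          T ((n * (k + 1) : ℕ)) := by
      rw [Finset.sum_congr rfl fun l _ => ih i l, Finset.sum_add_distrib,
        Finset.sum_ite_eq Finset.univ i, if_pos (Finset.mem_univ i), ← Finset.mul_sum]
      congr 1
      rw [← telescope (n := n), Fin.sum_univ_eq_sum_range
        (fun l : ℕ => (T (l : ℕ) : LaurentPolynomial ℤ) - T ((l : ℕ) + 1)) n]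
    rw [hrow, ih i j]
    have hT : (T ((n * (k + 1) : ℕ)) : LaurentPolynomial ℤ) * T ((n : ℕ)) =
        T ((n * (k + 1 + 1) : ℕ)) := by
      rw [← T_add]
      congr 1
    have hS := Finset.sum_range_succ (fun m : ℕ => (T ((n * m : ℕ)) : LaurentPolynomial ℤ)) (k + 1)
    by_cases h : i = j
    · simp only [if_pos h]
      linear_combination hT - hS * (T ((j : ℕ)) - T ((j : ℕ) + 1))
    · simp only [if_neg h]
      linear_combination -hS * (T ((j : ℕ)) - T ((j : ℕ) + 1))

lemma lcoeff_closed {n : ℕ} (hn : 2 ≤ n) (i j : Fin n) (k : ℕ) (r : ℤ) :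
    lcoeff ((fullTwist n ^ (k + 1)) i j) r =
      (∑ m ∈ Finset.range (k + 1),
        ((if ((n * m : ℕ) : ℤ) + ((j : ℕ) : ℤ) = r then 1 else 0)
          - (if ((n * m : ℕ) : ℤ) + ((j : ℕ) : ℤ) + 1 = r then 1 else 0)))
      + (if i = j ∧ ((n * (k + 1) : ℕ) : ℤ) = r then 1 else 0) := by
  rw [fullTwist_pow hn k i j, Finset.sum_mul]
  have h1 : ∀ m ∈ Finset.range (k + 1),
      (T ((n * m : ℕ)) : LaurentPolynomial ℤ) * (T ((j : ℕ)) - T (((j : ℕ) : ℤ) + 1)) =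
        T (((n * m : ℕ) : ℤ) + ((j : ℕ) : ℤ)) - T (((n * m : ℕ) : ℤ) + ((j : ℕ) : ℤ) + 1) := by
    intro m _
    rw [mul_sub, ← T_add, ← T_add, add_assoc]
  rw [Finset.sum_congr rfl h1]
  have e1 : ∀ p q : LaurentPolynomial ℤ, AddMonoidAlgebra.coeff (p + q) r =
      AddMonoidAlgebra.coeff p r + AddMonoidAlgebra.coeff q r :=
    fun p q => Finsupp.add_apply _ _ r
  have e2 : ∀ p q : LaurentPolynomial ℤ, AddMonoidAlgebra.coeff (p - q) r =
      AddMonoidAlgebra.coeff p r - AddMonoidAlgebra.coeff q r :=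
    fun p q => Finsupp.sub_apply _ _ r
  have eT : ∀ a : ℤ, AddMonoidAlgebra.coeff (T a : LaurentPolynomial ℤ) r = if a = r then 1 else 0 :=
    fun a => Finsupp.single_apply
  show _ = _
  rw [lcoeff, e1]
  congr 1
  · rw [AddMonoidAlgebra.coeff_sum, Finset.sum_apply']
    refine Finset.sum_congr rfl fun m _ => ?_
    rw [e2, eT, eT]
  · by_cases h : i = j
    · simp only [h, if_pos, ite_true, true_and, eT]
    · simp only [h, if_neg, ite_false, false_and]
      exact rfl

open PowerSeries in

noncomputable def Sser (n : ℕ) (jv : ℕ) : PowerSeries ℤ :=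
  X ^ jv * (1 - X) * invOfUnit (1 - X ^ n) 1

open PowerSeries in

lemma Sunit {n : ℕ} (hn : 2 ≤ n) :
    ((1 - X ^ n : PowerSeries ℤ)) * invOfUnit (1 - X ^ n) 1 = 1 := by
  refine mul_invOfUnit _ _ ?_
  simp [zero_pow (by omega : n ≠ 0)]

open PowerSeries in

lemma Sspec {n : ℕ} (hn : 2 ≤ n) (jv : ℕ) :
    (∑ m ∈ Finset.range n, (X : PowerSeries ℤ) ^ m) * Sser n jv = X ^ jv := by
  have hg : (∑ m ∈ Finset.range n, (X : PowerSeries ℤ) ^ m) * (1 - X) = 1 - X ^ n := by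
    linear_combination -geom_sum_mul (X : PowerSeries ℤ) n
  calc (∑ m ∈ Finset.range n, (X : PowerSeries ℤ) ^ m) * Sser n jv
      = ((∑ m ∈ Finset.range n, (X : PowerSeries ℤ) ^ m) * (1 - X)) *
          (X ^ jv * invOfUnit (1 - X ^ n) 1) := by rw [Sser]; ring
    _ = X ^ jv * ((1 - X ^ n) * invOfUnit (1 - X ^ n) 1) := by rw [hg]; ring
    _ = X ^ jv := by rw [Sunit hn, mul_one]

open PowerSeries in

lemma Strunc {n : ℕ} (hn : 2 ≤ n) (jv : ℕ) (K R : ℕ) (hK : R < n * K) :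
    PowerSeries.coeff R (Sser n jv) =
      ∑ m ∈ Finset.range K,
        ((if n * m + jv = R then 1 else 0) - (if n * m + jv + 1 = R then 1 else 0)) := by
  have hg : (∑ m ∈ Finset.range K, ((X : PowerSeries ℤ) ^ n) ^ m) * (1 - X ^ n)
      = 1 - (X ^ n) ^ K := by
    linear_combination -geom_sum_mul ((X : PowerSeries ℤ) ^ n) K
  have hS1 : Sser n jv * (1 - X ^ n) = X ^ jv * (1 - X) := by
    rw [Sser]
    linear_combination (((X : PowerSeries ℤ)) ^ jv * (1 - X)) * Sunit hn
  have hsum : (∑ m ∈ Finset.range K, (X : PowerSeries ℤ) ^ (n * m) * (X ^ jv - X ^ (jv + 1)))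
      = (∑ m ∈ Finset.range K, ((X : PowerSeries ℤ) ^ n) ^ m) * (X ^ jv - X ^ (jv + 1)) := by
    rw [Finset.sum_mul]
    exact Finset.sum_congr rfl fun m _ => by rw [pow_mul]
  have key : Sser n jv =
      (∑ m ∈ Finset.range K, (X : PowerSeries ℤ) ^ (n * m) * (X ^ jv - X ^ (jv + 1)))
        + Sser n jv * (X ^ n) ^ K := by
    rw [hsum]
    linear_combination (∑ m ∈ Finset.range K, ((X : PowerSeries ℤ) ^ n) ^ m) * hS1
      - Sser n jv * hg
  rw [key, map_add, map_sum]
  have hlast : PowerSeries.coeff R (Sser n jv * (X ^ n) ^ K) = 0 := by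
    rw [← pow_mul, PowerSeries.coeff_mul_X_pow', if_neg (by omega)]
  rw [hlast, add_zero]
  refine Finset.sum_congr rfl fun m _ => ?_
  rw [mul_sub, ← pow_add, ← pow_add, map_sub, PowerSeries.coeff_X_pow, PowerSeries.coeff_X_pow]
  congr 1 <;> exact if_congr (by omega) rfl rfl

lemma lcoeff_stable {n : ℕ} (hn : 2 ≤ n) (i j : Fin n) (r : ℤ) (t₀ t : ℕ)
    (ht : t₀ ≤ t) (hr : r < ((n * (t₀ + 1) : ℕ) : ℤ)) :
    lcoeff ((fullTwist n ^ (t + 1)) i j) r =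
      ∑ m ∈ Finset.range (t₀ + 1),
        ((if ((n * m : ℕ) : ℤ) + ((j : ℕ) : ℤ) = r then 1 else 0)
          - (if ((n * m : ℕ) : ℤ) + ((j : ℕ) : ℤ) + 1 = r then 1 else 0)) := by
  rw [lcoeff_closed hn i j t r]
  have hδ : n * (t₀ + 1) ≤ n * (t + 1) := Nat.mul_le_mul le_rfl (by omega)
  rw [if_neg (fun hc : _ ∧ _ => by have := hc.2; omega), add_zero]
  refine (Finset.sum_subset (Finset.range_subset_range.2 (by omega)) ?_).symm
  intro m _ hm'
  have h1 : t₀ + 1 ≤ m := by simp only [Finset.mem_range, not_lt] at hm'; omega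
  have h2 : n * (t₀ + 1) ≤ n * m := Nat.mul_le_mul le_rfl h1
  rw [if_neg (by omega), if_neg (by omega)]
  ring

/-- The sequence `k ↦ (Ω_n^k)_{ij}` (for `k ≥ 1`) stabilizes positively, and its eventual
coefficients are those of the unique formal power series `S` with
`(1 + T + ⋯ + T^{n-1}) S = T^{j-1}` (0-indexed: `T^j`); coefficients in negative
degrees are eventually `0`. -/
theorem stmt7 (n : ℕ) (hn : 2 ≤ n) (i j : Fin n) :
    StabilizesPositively (fun k => (fullTwist n ^ (k + 1)) i j) ∧
    ∃ S : PowerSeries ℤ,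
      (∑ m ∈ Finset.range n, PowerSeries.X ^ m) * S = PowerSeries.X ^ (j : ℕ) ∧
      IsEventualCoeff (fun k => (fullTwist n ^ (k + 1)) i j)
        (fun r => if 0 ≤ r then PowerSeries.coeff r.toNat S else 0) := by
  constructor
  · intro r₀
    refine ⟨r₀.toNat + 1, fun t ht r hr => ?_⟩
    have h2 : 2 * (r₀.toNat + 1 + 1) ≤ n * (r₀.toNat + 1 + 1) := Nat.mul_le_mul hn le_rfl
    have hb : r < ((n * (r₀.toNat + 1 + 1) : ℕ) : ℤ) := by omega
    rw [lcoeff_stable hn i j r _ t ht hb, lcoeff_stable hn i j r _ _ le_rfl hb]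
  · refine ⟨Sser n (j : ℕ), Sspec hn (j : ℕ), fun r => ?_⟩
    by_cases hr : 0 ≤ r
    · refine ⟨r.toNat + 1, fun t ht => ?_⟩
      have h2 : 2 * (r.toNat + 1 + 1) ≤ n * (r.toNat + 1 + 1) := Nat.mul_le_mul hn le_rfl
      have hb : r < ((n * (r.toNat + 1 + 1) : ℕ) : ℤ) := by omega
      rw [lcoeff_stable hn i j r _ t ht hb]
      simp only [if_pos hr]
      rw [Strunc hn (j : ℕ) (r.toNat + 1 + 1) r.toNat (by omega)]
      refine Finset.sum_congr rfl fun m _ => ?_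
      push_cast
      congr 1 <;> exact if_congr (by omega) rfl rfl
    · refine ⟨0, fun t _ => ?_⟩
      have h2 : 2 * 1 ≤ n * 1 := Nat.mul_le_mul hn le_rfl
      have hb : r < ((n * (0 + 1) : ℕ) : ℤ) := by omega
      rw [lcoeff_stable hn i j r 0 t (by omega) hb]
      simp only [if_neg hr]
      refine Finset.sum_eq_zero fun m hm => ?_
      rw [if_neg (by omega), if_neg (by omega)]
      ring
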